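/- arXiv:1402.5887 — 7 statements merged into one kernel-verified Lean document; each statement's English description precedes it below -/
import Mathlib

section
/- Let n ≥ 10 and α ≥ 5 be integers with 2α ≥ n−1 and α ≤ n−3, set f(x) = x⁴ − (α+3)x² − 4x + (2α−n+1) and f₁(x) = x⁸ − (α+5)x⁶ − 4x⁵ − (n−6α)x⁴ + 4x³ + (4n−9α−5)x² − 2x − (n−2α−1). If ρ > 2 is a real root of f₁, then f(ρ) < 0. -/
/-- If `ρ > 2` is a root of `f₁`, then `f(ρ) < 0`. -/
theorem f_neg_at_root_of_f1 (n α : ℤ) (hn : 10 ≤ n) (hα : 5 ≤ α)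
    (h1 : n - 1 ≤ 2 * α) (h2 : α ≤ n - 3) (ρ : ℝ) (hρ : 2 < ρ)
    (hroot : ρ^8 - ((α : ℝ) + 5)*ρ^6 - 4*ρ^5 - ((n : ℝ) - 6*(α : ℝ))*ρ^4 + 4*ρ^3
        + (4*(n : ℝ) - 9*(α : ℝ) - 5)*ρ^2 - 2*ρ - ((n : ℝ) - 2*(α : ℝ) - 1) = 0) :
    ρ^4 - ((α : ℝ) + 3)*ρ^2 - 4*ρ + (2*(α : ℝ) - (n : ℝ) + 1) < 0 := by
  have hA : (5:ℝ) ≤ (α:ℝ) := by exact_mod_cast hα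
  have hN : (10:ℝ) ≤ (n:ℝ) := by exact_mod_cast hn
  have h1' : (n:ℝ) - 1 ≤ 2*(α:ℝ) := by exact_mod_cast h1
  have h2' : (α:ℝ) ≤ (n:ℝ) - 3 := by exact_mod_cast h2
  have hg : 0 < ((α:ℝ) - 4)*ρ^3 - 2*ρ^2 + ((n:ℝ) - 2*(α:ℝ))*ρ + 1 := by
    nlinarith [sq_nonneg ρ, sq_nonneg (ρ - 2), mul_pos (by linarith : (0:ℝ) < ρ - 2) (by nlinarith : (0:ℝ) < ρ^2), mul_pos (by linarith : (0:ℝ) < ρ) (mul_pos (by linarith : (0:ℝ) < ρ) (by linarith : (0:ℝ) < ρ - 2))]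
  have hkey : (ρ^2 - 1)^2 * (ρ^4 - ((α : ℝ) + 3)*ρ^2 - 4*ρ + (2*(α : ℝ) - (n : ℝ) + 1))
      = -(2*ρ*(((α:ℝ) - 4)*ρ^3 - 2*ρ^2 + ((n:ℝ) - 2*(α:ℝ))*ρ + 2)) + 2*ρ := by
    linear_combination hroot
  have hsq : 0 < (ρ^2 - 1)^2 := pow_pos (by nlinarith) 2
  have hg2 : 0 < (((α:ℝ) - 4)*ρ^3 - 2*ρ^2 + ((n:ℝ) - 2*(α:ℝ))*ρ + 2) - 1 := by linarith
  nlinarith [mul_pos (by linarith : (0:ℝ) < 2*ρ) hg2]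
end

section
/- Let n ≥ 10 and α ≥ 5 be integers with 2α ≥ n−1 and α ≤ n−3, set f(x) = x⁴ − (α+3)x² − 4x + (2α−n+1) and f₂(x) = x⁶ − x⁵ − (α+3)x⁴ + (α−2)x³ − (n−3α−5)x² + (n−2α+1)x − (n−2α−1). If ρ is a real number with ρ > 2, ρ² > α+1, and f₂(ρ) = 0, then f(ρ) < 0. -/
/-- If `ρ > 2`, `ρ² > α+1` and `f₂(ρ) = 0`, then `f(ρ) < 0`. -/
theorem f_neg_at_root_of_f2 (n α : ℤ) (hn : 10 ≤ n) (hα : 5 ≤ α)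
    (h1 : n - 1 ≤ 2 * α) (h2 : α ≤ n - 3) (ρ : ℝ) (hρ : 2 < ρ) (hρ2 : (α : ℝ) + 1 < ρ^2)
    (hroot : ρ^6 - ρ^5 - ((α : ℝ) + 3)*ρ^4 + ((α : ℝ) - 2)*ρ^3
        - ((n : ℝ) - 3*(α : ℝ) - 5)*ρ^2 + ((n : ℝ) - 2*(α : ℝ) + 1)*ρ - ((n : ℝ) - 2*(α : ℝ) - 1) = 0) :
    ρ^4 - ((α : ℝ) + 3)*ρ^2 - 4*ρ + (2*(α : ℝ) - (n : ℝ) + 1) < 0 := by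
  have ha : (5 : ℝ) ≤ (α : ℝ) := by exact_mod_cast hα
  have hs : (0 : ℝ) ≤ 2*(α : ℝ) - (n : ℝ) + 1 := by
    have : (n : ℝ) - 1 ≤ 2 * (α : ℝ) := by exact_mod_cast h1
    linarith
  have hs2 : 2*(α : ℝ) - (n : ℝ) + 1 ≤ (α : ℝ) - 2 := by
    have : (α : ℝ) ≤ (n : ℝ) - 3 := by exact_mod_cast h2
    linarith
  set F : ℝ := ρ^4 - ((α : ℝ) + 3)*ρ^2 - 4*ρ + (2*(α : ℝ) - (n : ℝ) + 1) with hF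
  set E : ℝ := ((α : ℝ) - 2)*ρ^4 + (2*(α : ℝ) - (n : ℝ) + 2)*ρ^2
      + 2*(2*(α : ℝ) - (n : ℝ) + 2)*ρ - 2*(2*(α : ℝ) - (n : ℝ) + 1) with hE
  have key : (ρ^2 - 1)^2 * F = -E := by
    rw [hF, hE]; linear_combination (ρ^2 + ρ - 1) * hroot
  have hEpos : 0 < E := by
    rw [hE]
    nlinarith [sq_nonneg ρ, sq_nonneg (ρ - 2), mul_pos (by linarith : (0:ℝ) < (α:ℝ) - 2)
      (by nlinarith : (0:ℝ) < ρ^4 - 2)]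
  have hd : 0 < (ρ^2 - 1)^2 := by nlinarith
  have hneg : (ρ^2 - 1)^2 * F < 0 := by rw [key]; linarith
  by_contra h
  push_neg at h
  nlinarith [mul_nonneg (le_of_lt hd) h]
end

section
/- Let n ≥ 10 and α ≥ 5 be integers with 2α ≥ n−1 and α ≤ n−3, set f(x) = x⁴ − (α+3)x² − 4x + (2α−n+1) and f₃(x) = x⁸ − (α+5)x⁶ − 4x⁵ − (n−5α−4)x⁴ + 6x³ + (3n−7α−4)x² − 2x − (n−2α−1). If ρ is a real number with ρ > 2, ρ² > α+1, and f₃(ρ) = 0, then f(ρ) < 0. -/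
/-- If `ρ > 2`, `ρ² > α+1` and `f₃(ρ) = 0`, then `f(ρ) < 0`. -/
theorem f_neg_at_root_of_f3 (n α : ℤ) (hn : 10 ≤ n) (hα : 5 ≤ α)
    (h1 : n - 1 ≤ 2 * α) (h2 : α ≤ n - 3) (ρ : ℝ) (hρ : 2 < ρ) (hρ2 : (α : ℝ) + 1 < ρ^2)
    (hroot : ρ^8 - ((α : ℝ) + 5)*ρ^6 - 4*ρ^5 - ((n : ℝ) - 5*(α : ℝ) - 4)*ρ^4 + 6*ρ^3
        + (3*(n : ℝ) - 7*(α : ℝ) - 4)*ρ^2 - 2*ρ - ((n : ℝ) - 2*(α : ℝ) - 1) = 0) :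
    ρ^4 - ((α : ℝ) + 3)*ρ^2 - 4*ρ + (2*(α : ℝ) - (n : ℝ) + 1) < 0 := by
  have hα' : (5:ℝ) ≤ (α:ℝ) := by exact_mod_cast hα
  have hn' : (α:ℝ) + 3 ≤ (n:ℝ) := by exact_mod_cast (by linarith : α + 3 ≤ n)
  -- g(ρ) = (α−4)ρ³ − 2ρ² + (n−2α+1)ρ + 2 > 0
  have hg : ((α:ℝ) - 4)*ρ^3 - 2*ρ^2 + ((n:ℝ) - 2*(α:ℝ) + 1)*ρ + 2 > 0 := by
    nlinarith [mul_pos (by nlinarith : (0:ℝ) < ρ^2 - 1) (by nlinarith : (0:ℝ) < ((α:ℝ) - 4)*ρ - 2),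
      mul_nonneg (by linarith : (0:ℝ) ≤ (n:ℝ) - 2*(α:ℝ) + 1 - (4 - (α:ℝ))) (by linarith : (0:ℝ) ≤ ρ)]
  -- identity: f₃(ρ) − (ρ²−1)² f(ρ) = ρ · g(ρ)
  have hsq : (0:ℝ) < (ρ^2 - 1)^2 := pow_pos (by nlinarith) 2
  have key : (ρ^2 - 1)^2 * (ρ^4 - ((α : ℝ) + 3)*ρ^2 - 4*ρ + (2*(α : ℝ) - (n : ℝ) + 1))
      = - (ρ * (((α:ℝ) - 4)*ρ^3 - 2*ρ^2 + ((n:ℝ) - 2*(α:ℝ) + 1)*ρ + 2)) := by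
    nlinarith [hroot]
  have h0 : (ρ^2 - 1)^2 * (ρ^4 - ((α : ℝ) + 3)*ρ^2 - 4*ρ + (2*(α : ℝ) - (n : ℝ) + 1)) < 0 := by
    rw [key]
    nlinarith [mul_pos (by linarith : (0:ℝ) < ρ) hg]
  by_contra h
  push_neg at h
  nlinarith [mul_nonneg (le_of_lt hsq) h]
end

section
/- Let n ≥ 10 and α ≥ 5 be integers with 2α ≥ n−1 and α ≤ n−3, and set f(x) = x⁴ − (α+3)x² − 4x + (2α−n+1), f₄(x) = x⁷ − (α+5)x⁵ − 4x⁴ − (n−6α−3)x³ + 2(α+1)x² + (4n−8α−9)x + 2(n−2α−2). If ρ is a real number with ρ > 1, ρ² > α, and f₄(ρ) = 0, then f(ρ) < 0. -/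
/-- If `ρ > 1`, `ρ² > α` and `f₄(ρ) = 0`, then `f(ρ) < 0`. -/
theorem f_neg_at_root_of_f4 (n α : ℤ) (hn : 10 ≤ n) (hα : 5 ≤ α)
    (h1 : n - 1 ≤ 2 * α) (h2 : α ≤ n - 3) (ρ : ℝ) (hρ : 1 < ρ) (hρ2 : (α : ℝ) < ρ^2)
    (hroot : ρ^7 - ((α : ℝ) + 5)*ρ^5 - 4*ρ^4 - ((n : ℝ) - 6*(α : ℝ) - 3)*ρ^3
        + 2*((α : ℝ) + 1)*ρ^2 + (4*(n : ℝ) - 8*(α : ℝ) - 9)*ρ + 2*((n : ℝ) - 2*(α : ℝ) - 2) = 0) :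
    ρ^4 - ((α : ℝ) + 3)*ρ^2 - 4*ρ + (2*(α : ℝ) - (n : ℝ) + 1) < 0 := by
  have hα' : (5 : ℝ) ≤ (α : ℝ) := by exact_mod_cast hα
  have hn' : (10 : ℝ) ≤ (n : ℝ) := by exact_mod_cast hn
  have h1' : (n : ℝ) - 1 ≤ 2 * (α : ℝ) := by exact_mod_cast h1
  have h2' : (α : ℝ) ≤ (n : ℝ) - 3 := by exact_mod_cast h2
  set A : ℝ := (α : ℝ)
  set N : ℝ := (n : ℝ)
  have hρ0 : (0 : ℝ) < ρ := lt_trans one_pos hρ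
  have hρsq : (0 : ℝ) < ρ^2 := by positivity
  have hd : (0 : ℝ) < ρ^2 - A := sub_pos.mpr hρ2
  have hr1 : (0 : ℝ) < ρ - 1 := sub_pos.mpr hρ
  -- identity: ρ * f₄(ρ) - (ρ²-1)² f(ρ) = RHS
  have hid : (ρ^2 - 1)^2 * (ρ^4 - (A + 3)*ρ^2 - 4*ρ + (2*A - N + 1))
      = - ((2*A - 5)*ρ^4 + 2*(A - 3)*ρ^3 + (2*N - 3*A - 4)*ρ^2
          + 2*(N - 2*A)*ρ + (N - 2*A - 1)) := by
    nlinarith [hroot, mul_self_nonneg ρ]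
  have hRHS : 0 < (2*A - 5)*ρ^4 + 2*(A - 3)*ρ^3 + (2*N - 3*A - 4)*ρ^2
      + 2*(N - 2*A)*ρ + (N - 2*A - 1) := by
    have hA5 : (0:ℝ) ≤ A - 5 := by linarith
    have hq1 : (0:ℝ) < ρ^2 - 1 := by nlinarith
    nlinarith [mul_pos (mul_pos hd hρsq) (show (0:ℝ) < 2*A - 5 by linarith),
      mul_pos (mul_pos hd hρ0) (show (0:ℝ) < A - 3 by linarith),
      mul_nonneg (mul_nonneg hA5 (by linarith : (0:ℝ) ≤ A)) hq1.le,
      mul_nonneg (mul_nonneg hA5 (by linarith : (0:ℝ) ≤ A)) hr1.le,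
      mul_nonneg hA5 hA5, mul_pos hq1 hρ0, mul_pos hr1 hρ0]
  have hsq : 0 < (ρ^2 - 1)^2 := by
    have h : ρ^2 - 1 > 0 := by nlinarith
    positivity
  nlinarith [hid, hRHS, hsq, mul_pos hsq hRHS]
end

section
/- Let n ≥ 10 and α be integers with (n−1)/2 ≤ α ≤ n−3, and set f(x) = x⁴ − (α+3)x² − 4x + (2α−n+1). Then f has a real root ρ with ρ > 2, f is strictly positive on (ρ, ∞), and ρ is the unique root of f in (2, ∞); moreover ρ² > α+1. -/
open Set Filter Topology

/-- The quartic `f(x) = x⁴ − (α+3)x² − 4x + (2α−n+1)` has a real root `ρ > 2`,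
`f` is strictly positive on `(ρ, ∞)`, `ρ` is the unique root of `f` in `(2, ∞)`,
and `ρ² > α + 1`. -/
theorem extremal_quartic_root (n α : ℤ) (hn : 10 ≤ n) (h1 : n - 1 ≤ 2 * α) (h2 : α ≤ n - 3) :
    ∃ ρ : ℝ, 2 < ρ ∧
      ρ^4 - ((α : ℝ) + 3)*ρ^2 - 4*ρ + (2*(α : ℝ) - (n : ℝ) + 1) = 0 ∧
      (∀ x : ℝ, ρ < x → 0 < x^4 - ((α : ℝ) + 3)*x^2 - 4*x + (2*(α : ℝ) - (n : ℝ) + 1)) ∧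
      (∀ x : ℝ, 2 < x → x^4 - ((α : ℝ) + 3)*x^2 - 4*x + (2*(α : ℝ) - (n : ℝ) + 1) = 0 → x = ρ) ∧
      (α : ℝ) + 1 < ρ^2 := by
  have hα5 : (5:ℤ) ≤ α := by omega
  have hαR : (5:ℝ) ≤ (α:ℝ) := by exact_mod_cast hα5
  have hnR : (10:ℝ) ≤ (n:ℝ) := by exact_mod_cast hn
  have hc0 : (0:ℝ) ≤ 2*(α:ℝ) - (n:ℝ) + 1 := by
    have : (n:ℝ) - 1 ≤ 2*(α:ℝ) := by exact_mod_cast h1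
    linarith
  have hca : 2*(α:ℝ) - (n:ℝ) + 1 ≤ (α:ℝ) - 2 := by
    have : (α:ℝ) ≤ (n:ℝ) - 3 := by exact_mod_cast h2
    linarith
  set F : ℝ → ℝ := fun x => x^4 - ((α:ℝ)+3)*x^2 - 4*x + (2*(α:ℝ) - (n:ℝ) + 1) with hFdef
  set D : ℝ → ℝ := fun x => 4*x^3 - 2*((α:ℝ)+3)*x - 4 with hDdef
  have hcont : Continuous F := by fun_prop
  have hderiv : ∀ x : ℝ, HasDerivAt F (D x) x := by
    intro x
    have h := ((((hasDerivAt_pow 4 x).sub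
        ((hasDerivAt_pow 2 x).const_mul ((α:ℝ)+3))).sub
        ((hasDerivAt_id x).const_mul 4)).add_const (2*(α:ℝ) - (n:ℝ) + 1))
    have h' : HasDerivAt F _ x := h
    convert h' using 1
    simp only [hDdef]
    push_cast
    ring
  have lemA : ∀ x : ℝ, 2 ≤ x → 0 ≤ F x → 0 < D x := by
    intro x hx hFx
    have hx2 : (0:ℝ) ≤ x^2 - 4 := by nlinarith
    have hxD : 0 < x * D x := by
      simp only [hFdef] at hFx
      simp only [hDdef]
      nlinarith [mul_nonneg (by linarith : (0:ℝ) ≤ (α:ℝ)+3) hx2]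
    by_contra hD
    push_neg at hD
    nlinarith
  set A : ℝ := (α:ℝ) + 3 with hAdef
  have hA8 : (8:ℝ) ≤ A := by simp [hAdef]; linarith
  have hF2 : F 2 < 0 := by simp only [hFdef]; nlinarith
  have hbig : ∀ y : ℝ, A ≤ y → 0 < F y := by
    intro y hy
    have hy8 : (8:ℝ) ≤ y := le_trans hA8 hy
    have h7 : 0 < y^3 - y^2 - 4 := by
      nlinarith [mul_nonneg (mul_nonneg (by linarith : (0:ℝ) ≤ y - 8) (by linarith : (0:ℝ) ≤ y - 8)) (by linarith : (0:ℝ) ≤ y - 8)]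
    simp only [hFdef]
    nlinarith [mul_pos (by linarith : (0:ℝ) < y) h7,
      mul_nonneg (sq_nonneg y) (by linarith : (0:ℝ) ≤ y - A)]
  set S : Set ℝ := Icc 2 A ∩ {t | F t ≤ 0} with hSdef
  have hSclosed : IsClosed S := isClosed_Icc.inter (isClosed_le hcont continuous_const)
  have hSne : S.Nonempty := ⟨2, ⟨le_refl 2, by linarith⟩, le_of_lt hF2⟩
  have hSbdd : BddAbove S := ⟨A, fun t ht => ht.1.2⟩
  set ρ : ℝ := sSup S with hρdef
  have hρS : ρ ∈ S := hSclosed.csSup_mem hSne hSbdd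
  have hρ2 : 2 ≤ ρ := hρS.1.1
  have hρA : ρ ≤ A := hρS.1.2
  have hρle : F ρ ≤ 0 := hρS.2
  -- F ρ = 0
  have hFρ : F ρ = 0 := by
    by_contra hne
    have hlt : F ρ < 0 := lt_of_le_of_ne hρle hne
    have hρA' : ρ < A := by
      rcases lt_or_eq_of_le hρA with h | h
      · exact h
      · exfalso; have := hbig A le_rfl; rw [← h] at this; linarith
    have h1' : ∀ᶠ t in 𝓝[>] ρ, F t < 0 :=
      ((hcont.continuousAt.eventually_lt continuousAt_const hlt).filter_mono
        nhdsWithin_le_nhds)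
    have h2' : ∀ᶠ t in 𝓝[>] ρ, t < A :=
      eventually_nhdsWithin_of_eventually_nhds (Filter.Tendsto.eventually_lt_const hρA' tendsto_id)
    have h3' : ∀ᶠ t in 𝓝[>] ρ, ρ < t := eventually_mem_nhdsWithin
    obtain ⟨t, ht1, ht2, ht3⟩ := (h1'.and (h2'.and h3')).exists
    have htS : t ∈ S := ⟨⟨by linarith, le_of_lt ht2⟩, le_of_lt ht1⟩
    have := le_csSup hSbdd htS
    linarith
  have hρ2' : 2 < ρ := by
    rcases lt_or_eq_of_le hρ2 with h | h
    · exact h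
    · exfalso; rw [← h] at hFρ; linarith
  -- positivity on (ρ, ∞)
  have hpos : ∀ y : ℝ, ρ < y → 0 < F y := by
    intro y hy
    rcases le_or_gt y A with hyA | hyA
    · by_contra hFy
      push_neg at hFy
      have hyS : y ∈ S := ⟨⟨by linarith, hyA⟩, hFy⟩
      have := le_csSup hSbdd hyS
      linarith
    · exact hbig y (le_of_lt hyA)
  -- slope lemma: at a root x > 2, eventually F t > 0 just to the right
  have hslope : ∀ x : ℝ, 2 < x → F x = 0 → ∀ᶠ t in 𝓝[>] x, 0 < F t := by
    intro x hx hFx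
    have hD : 0 < D x := lemA x (le_of_lt hx) (le_of_eq hFx.symm)
    have htend : Tendsto (slope F x) (𝓝[≠] x) (𝓝 (D x)) :=
      hasDerivAt_iff_tendsto_slope.1 (hderiv x)
    have hev : ∀ᶠ t in 𝓝[≠] x, 0 < slope F x t :=
      htend.eventually (eventually_gt_nhds hD)
    have hev' : ∀ᶠ t in 𝓝[>] x, 0 < slope F x t :=
      hev.filter_mono (nhdsWithin_mono x fun t ht => ne_of_gt ht)
    filter_upwards [hev', eventually_mem_nhdsWithin] with t hts htx
    have : 0 < (F t - F x) / (t - x) := by simpa [slope_def_field, div_eq_iff] using hts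
    have hxt : 0 < t - x := by simpa using sub_pos.2 (mem_Ioi.1 htx)
    have := mul_pos this hxt
    rw [div_mul_cancel₀] at this
    · linarith [hFx ▸ this]
    · exact ne_of_gt hxt
  -- uniqueness
  have huniq : ∀ x : ℝ, 2 < x → F x = 0 → x = ρ := by
    intro x hx hFx
    rcases lt_trichotomy x ρ with hlt | heq | hgt
    · exfalso
      obtain ⟨M, hMmem, hMmax⟩ := isCompact_Icc.exists_isMaxOn
        (nonempty_Icc.2 (le_of_lt hlt)) hcont.continuousOn
      rcases lt_or_eq_of_le hMmem.1 with hMx | hMx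
      · rcases lt_or_eq_of_le hMmem.2 with hMρ | hMρ
        · -- M interior
          have hloc : IsLocalMax F M := hMmax.isLocalMax (Icc_mem_nhds hMx hMρ)
          have hD0 : D M = 0 := hloc.hasDerivAt_eq_zero (hderiv M)
          have hFM : 0 ≤ F M := by
            simpa [hFx] using hMmax (left_mem_Icc.2 (le_of_lt hlt))
          have := lemA M (by linarith) hFM
          linarith
        · -- M = ρ : F ≤ 0 on Icc, use slope at x
          have hall : ∀ t ∈ Icc x ρ, F t ≤ 0 := by
            intro t ht
            have := hMmax ht
            rw [hMρ] at this
            simpa [hFρ] using this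
          obtain ⟨t, ht1, ht2⟩ := ((hslope x hx hFx).and
            (eventually_nhdsWithin_of_eventually_nhds
              (Filter.Tendsto.eventually_lt_const hlt tendsto_id) |>.and
              eventually_mem_nhdsWithin)).exists
          have := hall t ⟨le_of_lt ht2.2, le_of_lt ht2.1⟩
          linarith
      · -- M = x : F ≤ 0 on Icc, same slope argument
        have hall : ∀ t ∈ Icc x ρ, F t ≤ 0 := by
          intro t ht
          have := hMmax ht
          rw [← hMx] at this
          simpa [hFx] using this
        obtain ⟨t, ht1, ht2⟩ := ((hslope x hx hFx).and
          (eventually_nhdsWithin_of_eventually_nhds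
            (Filter.Tendsto.eventually_lt_const hlt tendsto_id) |>.and
            eventually_mem_nhdsWithin)).exists
        have := hall t ⟨le_of_lt ht2.2, le_of_lt ht2.1⟩
        linarith
    · exact heq
    · exfalso; have := hpos x hgt; linarith
  -- ρ² > α + 1
  have hsq : (α:ℝ) + 1 < ρ^2 := by
    by_contra hle
    push_neg at hle
    set s : ℝ := Real.sqrt ((α:ℝ)+1) with hsdef
    have hs0 : 0 ≤ s := Real.sqrt_nonneg _
    have hs2 : s^2 = (α:ℝ)+1 := Real.sq_sqrt (by linarith)
    have hρs : ρ ≤ s := by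
      nlinarith [sq_nonneg (ρ - s)]
    have hFs : F s < 0 := by
      simp only [hFdef]
      have : s^4 = ((α:ℝ)+1)^2 := by rw [show s^4 = (s^2)^2 by ring, hs2]
      nlinarith
    rcases lt_or_eq_of_le hρs with h | h
    · have := hpos s h; linarith
    · rw [← h] at hFs; linarith
  exact ⟨ρ, hρ2', hFρ, hpos, huniq, hsq⟩
end

section
/- Let G be a connected bicyclic graph on n vertices whose base is an ∞-graph B(p,ℓ,q) with ℓ ≥ 2 and both cycle lengths p, q odd, and suppose the graph G − V_c(G) obtained by deleting all cycle vertices has a perfect matching. Then α(G) = (n−2)/2. -/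
open SimpleGraph

/-- The independence number: the largest size of a set of pairwise nonadjacent vertices. -/
noncomputable def indepNum {V : Type*} [Fintype V] (G : SimpleGraph V) : ℕ :=
  sSup {k | ∃ s : Finset V, (∀ u ∈ s, ∀ v ∈ s, ¬ G.Adj u v) ∧ s.card = k}

/-- The set of vertices lying on some cycle of `G`. -/
def cycleVerts {V : Type*} (G : SimpleGraph V) : Set V :=
  {v | ∃ c : G.Walk v v, c.IsCycle}


lemma aux_cycle_bound {V : Type*} [Fintype V] [DecidableEq V] {G : SimpleGraph V} {a : V}
    {c : G.Walk a a} (hc : c.IsCycle) (hodd : Odd c.length) {s : Finset V}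
    (hs : ∀ u ∈ s, ∀ v ∈ s, ¬ G.Adj u v) :
    2 * (s ∩ c.support.tail.toFinset).card + 1 ≤ c.length := by
  classical
  set p := c.length with hp
  have hp3 : 3 ≤ p := hc.three_le_length
  obtain ⟨t, ht⟩ : ∃ l, c.support = a :: l := ⟨_, c.support_eq_cons⟩
  have htail : c.support.tail = t := by rw [ht]; rfl
  rw [htail]
  have hlen : t.length = p := by
    have h := c.length_support
    rw [ht] at h
    simpa using h
  have hnd : t.Nodup := by have h := hc.support_nodup; rwa [htail] at h
  have hchain : List.Chain G.Adj a t := by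
    have h := c.isChain_adj_support
    rw [ht] at h
    exact h
  have hhead : ∀ h : 0 < t.length, G.Adj a (t.get ⟨0, h⟩) := by
    intro h0
    have := (List.isChain_iff_getElem (l := a :: t)).mp hchain 0 (by simp; omega)
    simpa using this
  have hcons : ∀ (i : ℕ) (h : i < t.length - 1),
      G.Adj (t.get ⟨i, by omega⟩) (t.get ⟨i + 1, by omega⟩) := by
    intro i hi
    have := (List.isChain_iff_getElem (l := a :: t)).mp hchain (i + 1) (by simp; omega)
    simpa using this
  have htne : t ≠ [] := by
    intro h0
    rw [h0] at hlen
    simp at hlen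
    omega
  have hgc : ∀ (i j : ℕ) (hi : i < t.length) (hj : j < t.length), i = j →
      t.get ⟨i, hi⟩ = t.get ⟨j, hj⟩ := by
    rintro i _ hi hj rfl; rfl
  have hlast : t.get ⟨p - 1, by omega⟩ = a := by
    have h1 : c.support.getLast? = some a := by
      rw [List.getLast?_eq_getLast_of_ne_nil c.support_ne_nil]
      exact congrArg some c.getLast_support
    rw [ht, List.getLast?_eq_getLast_of_ne_nil (List.cons_ne_nil a t),
      List.getLast_cons htne] at h1
    have h2 : t.getLast htne = a := Option.some.inj h1
    rw [List.getLast_eq_getElem] at h2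
    exact (hgc (p-1) (t.length - 1) (by omega) (by omega) (by omega)).trans h2
  have hpos : 0 < p := by omega
  let f : Fin p → V := fun i => t.get ⟨i.1, by have := i.2; omega⟩
  have hfinj : Function.Injective f := by
    intro i j hij
    have h2 := List.nodup_iff_injective_get.mp hnd hij
    have h3 := congrArg Fin.val h2
    exact Fin.ext h3
  let σ : Fin p → Fin p := fun i => ⟨(i.1 + 1) % p, Nat.mod_lt _ hpos⟩
  have hσval : ∀ i : Fin p, (σ i).1 = if i.1 + 1 = p then 0 else i.1 + 1 := by
    intro i
    by_cases h : i.1 + 1 = p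
    · simp [σ, h]
    · have h2 : i.1 + 1 < p := by have := i.2; omega
      simp [σ, Nat.mod_eq_of_lt h2, h]
  have hσinj : Function.Injective σ := by
    intro i j hij
    have h3 := congrArg Fin.val hij
    rw [hσval i, hσval j] at h3
    have hi := i.2; have hj := j.2
    apply Fin.ext
    split_ifs at h3 <;> omega
  have hadj : ∀ i : Fin p, G.Adj (f i) (f (σ i)) := by
    intro i
    have hfi : f i = t.get ⟨i.1, by have := i.2; omega⟩ := rfl
    have hfσ : f (σ i) = t.get ⟨(σ i).1, by have := (σ i).2; omega⟩ := rfl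
    by_cases h : i.1 + 1 = p
    · have h0 : (σ i).1 = 0 := by rw [hσval]; simp [h]
      rw [hfi, hfσ]
      rw [hgc i.1 (p-1) _ (by omega) (by omega), hlast, hgc (σ i).1 0 _ (by omega) h0]
      exact hhead (by omega)
    · have h1 : (σ i).1 = i.1 + 1 := by rw [hσval]; simp [h]
      have h2 : i.1 < t.length - 1 := by have := i.2; omega
      have h4 := hcons i.1 h2
      rw [hfi, hfσ, hgc (σ i).1 (i.1+1) _ (by omega) h1]
      exact h4
  let I : Finset (Fin p) := Finset.univ.filter (fun i => f i ∈ s)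
  have himg : s ∩ t.toFinset = I.image f := by
    ext v
    simp only [Finset.mem_inter, List.mem_toFinset, Finset.mem_image, I, Finset.mem_filter,
      Finset.mem_univ, true_and]
    constructor
    · rintro ⟨hv1, hv2⟩
      obtain ⟨j, hj⟩ := List.mem_iff_get.mp hv2
      have hjlt : j.1 < p := by have := j.2; omega
      refine ⟨⟨j.1, hjlt⟩, ?_, ?_⟩
      · show t.get _ ∈ s
        rw [hgc _ j.1 _ j.2 rfl, hj]
        exact hv1
      · show t.get _ = v
        rw [hgc _ j.1 _ j.2 rfl, hj]
    · rintro ⟨i, hi, rfl⟩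
      exact ⟨hi, List.get_mem _ _⟩
  have hIcard : (s ∩ t.toFinset).card = I.card := by
    rw [himg, Finset.card_image_of_injective _ hfinj]
  let J : Finset (Fin p) := I.image σ
  have hdisj : Disjoint I J := by
    rw [Finset.disjoint_left]
    rintro j hjI hjJ
    obtain ⟨i, hiI, rfl⟩ := Finset.mem_image.mp hjJ
    have h1 : f i ∈ s := (Finset.mem_filter.mp hiI).2
    have h2 : f (σ i) ∈ s := (Finset.mem_filter.mp hjI).2
    exact hs _ h1 _ h2 (hadj i)
  have hJcard : J.card = I.card := Finset.card_image_of_injective _ hσinj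
  have hle : I.card + J.card ≤ p := by
    rw [← Finset.card_union_of_disjoint hdisj]
    calc (I ∪ J).card ≤ Fintype.card (Fin p) := Finset.card_le_univ _
      _ = p := Fintype.card_fin p
  have hne : 2 * I.card ≠ p := by
    obtain ⟨m, hm⟩ := hodd
    omega
  omega


lemma aux_reachable_delete {V : Type*} {G : SimpleGraph V} {x y : V}
    (hxy : (G \ fromEdgeSet {s(x, y)}).Reachable x y) :
    ∀ {a b : V}, G.Walk a b → (G \ fromEdgeSet {s(x, y)}).Reachable a b := by
  intro a b w
  induction w with
  | nil => exact Reachable.refl _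
  | @cons u v' b h p ih =>
    refine Reachable.trans ?_ ih
    by_cases he : s(u, v') = s(x, y)
    · rw [Sym2.eq_iff] at he
      rcases he with ⟨rfl, rfl⟩ | ⟨rfl, rfl⟩
      · exact hxy
      · exact hxy.symm
    · refine Adj.reachable ?_
      rw [sdiff_adj]
      refine ⟨h, ?_⟩
      rw [fromEdgeSet_adj]
      simp [he]

lemma aux_spanning_tree_aux {V : Type*} [Fintype V] :
    ∀ (k : ℕ) (G : SimpleGraph V), G.edgeSet.ncard ≤ k → G.Connected →
      ∃ T, T ≤ G ∧ T.IsTree := by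
  intro k
  induction k with
  | zero =>
    intro G hk hG
    by_cases hac : G.IsAcyclic
    · exact ⟨G, le_rfl, hG, hac⟩
    · exfalso
      rw [IsAcyclic] at hac
      push_neg at hac
      obtain ⟨v, c, hc⟩ := hac
      cases c with
      | nil => simpa using hc.three_le_length
      | cons h pw =>
        have hmem : s(v, _) ∈ G.edgeSet := h
        have : G.edgeSet.Nonempty := ⟨_, hmem⟩
        have hfin : G.edgeSet.Finite := Set.toFinite _
        have := (Set.ncard_pos hfin).mpr this
        omega
  | succ k ih =>
    intro G hk hG
    by_cases hac : G.IsAcyclic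
    · exact ⟨G, le_rfl, hG, hac⟩
    · rw [IsAcyclic] at hac
      push_neg at hac
      obtain ⟨v, c, hc⟩ := hac
      cases c with
      | nil => simpa using hc.three_le_length
      | @cons _ w _ h pw =>
        have he : s(v, w) ∈ (Walk.cons h pw).edges := by simp
        have hreach : (G \ fromEdgeSet {s(v, w)}).Reachable v w :=
          (adj_and_reachable_delete_edges_iff_exists_cycle.mpr ⟨v, _, hc, he⟩).2
        set G' := G \ fromEdgeSet {s(v, w)} with hG'
        have hG'le : G' ≤ G := sdiff_le
        have hG'conn : G'.Connected := by
          haveI := hG.nonempty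
          refine Connected.mk (fun a b => ?_)
          exact (hG.preconnected a b).elim (fun wk => aux_reachable_delete hreach wk)
        have hedge : G'.edgeSet = G.edgeSet \ {s(v, w)} := by
          rw [hG', edgeSet_sdiff, edgeSet_fromEdgeSet, edgeSet_sdiff_sdiff_isDiag]
        have hmem : s(v, w) ∈ G.edgeSet := h
        have hcard : G'.edgeSet.ncard ≤ k := by
          rw [hedge, Set.ncard_diff_singleton_of_mem hmem]
          have hpos : 0 < G.edgeSet.ncard := (Set.ncard_pos (Set.toFinite _)).mpr ⟨_, hmem⟩
          omega
        obtain ⟨T, hT1, hT2⟩ := ih G' hcard hG'conn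
        exact ⟨T, le_trans hT1 hG'le, hT2⟩

lemma aux_spanning_tree {V : Type*} [Fintype V] (G : SimpleGraph V) (hG : G.Connected) :
    ∃ T, T ≤ G ∧ T.IsTree :=
  aux_spanning_tree_aux G.edgeSet.ncard G le_rfl hG


lemma aux_tree_coloring {V : Type*} {T : SimpleGraph V} (hT : T.IsTree) :
    ∃ C : V → Bool, ∀ u v, T.Adj u v → C u ≠ C v := by
  classical
  obtain ⟨r⟩ := hT.isConnected.nonempty
  have hup := hT.existsUnique_path
  let L : V → ℕ := fun v => (hup r v).choose.length
  have hL : ∀ (v) (q : T.Walk r v), q.IsPath → q.length = L v := by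
    intro v q hq
    have := (hup r v).choose_spec.2 q hq
    rw [this]
  have key : ∀ u v, T.Adj u v → L v = L u + 1 ∨ L u = L v + 1 := by
    intro u v h
    have hPu : (hup r u).choose.IsPath := (hup r u).choose_spec.1
    set Pu := (hup r u).choose with hPudef
    by_cases hv : v ∈ Pu.support
    · right
      have hsplit := Pu.take_spec hv
      have htake : (Pu.takeUntil v hv).IsPath := hPu.takeUntil hv
      have hdrop : (Pu.dropUntil v hv).IsPath := hPu.dropUntil hv
      have hLv : (Pu.takeUntil v hv).length = L v := hL v _ htake
      have hone : (Pu.dropUntil v hv).length = 1 := by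
        have huniq := hT.existsUnique_path v u
        have h1 := huniq.unique hdrop (Path.singleton h.symm).2
        rw [h1]
        rfl
      have hlen := congrArg Walk.length hsplit
      rw [Walk.length_append] at hlen
      have hPulen : Pu.length = L u := rfl
      omega
    · left
      have hcon : (Pu.concat h).IsPath := by
        rw [← Walk.isPath_reverse_iff, Walk.reverse_concat]
        rw [Walk.cons_isPath_iff]
        refine ⟨(Walk.isPath_reverse_iff Pu).mpr hPu, ?_⟩
        rw [Walk.support_reverse, List.mem_reverse]
        exact hv
      have h2 := hL v _ hcon
      rw [Walk.length_concat] at h2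
      have hPulen : Pu.length = L u := rfl
      omega
  have hne : ∀ m : ℕ, decide ((m + 1) % 2 = 1) ≠ decide (m % 2 = 1) := by
    intro m
    rcases Nat.mod_two_eq_zero_or_one m with h0 | h0 <;>
      simp [Nat.add_mod, h0]
  refine ⟨fun v => decide (L v % 2 = 1), fun u v h => ?_⟩
  show decide (L u % 2 = 1) ≠ decide (L v % 2 = 1)
  rcases key u v h with h' | h'
  · rw [h']
    exact (hne (L u)).symm
  · rw [h']
    exact hne (L v)

lemma aux_mem_support_tail {V : Type*} {G : SimpleGraph V} {a : V} {c : G.Walk a a}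
    (hc : c.IsCycle) {v : V} : v ∈ c.support ↔ v ∈ c.support.tail := by
  obtain ⟨t, ht⟩ : ∃ l, c.support = a :: l := ⟨_, c.support_eq_cons⟩
  have htail : c.support.tail = t := by rw [ht]; rfl
  have hlen : t.length = c.length := by
    have h := c.length_support
    rw [ht] at h
    simpa using h
  have htne : t ≠ [] := by
    intro h0
    have h3 := hc.three_le_length
    rw [h0] at hlen
    simp at hlen
    omega
  have hlast : t.getLast htne = a := by
    have h1 : c.support.getLast? = some a := by
      rw [List.getLast?_eq_getLast_of_ne_nil c.support_ne_nil]
      exact congrArg some c.getLast_support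
    rw [ht, List.getLast?_eq_getLast_of_ne_nil (List.cons_ne_nil a t),
      List.getLast_cons htne] at h1
    exact Option.some.inj h1
  rw [htail, ht]
  constructor
  · intro h
    rcases List.mem_cons.mp h with rfl | h2
    · rw [← hlast]; exact List.getLast_mem htne
    · exact h2
  · intro h
    exact List.mem_cons_of_mem a h

/-- Let `G` be a connected bicyclic graph on `n` vertices whose base is an ∞-graph
`B(p,ℓ,q)` with `ℓ ≥ 2` (the two cycles are vertex-disjoint) and both cycle lengths odd,
and suppose `G − V_c(G)` has a perfect matching. Then `α(G) = (n−2)/2`. -/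
theorem bicyclic_indepNum_eq {V : Type*} [Fintype V] [DecidableEq V]
    (G : SimpleGraph V) [DecidableRel G.Adj]
    (hconn : G.Connected)
    (hbicyclic : G.edgeFinset.card = Fintype.card V + 1)
    (hbase : ∃ (a b : V) (c1 : G.Walk a a) (c2 : G.Walk b b),
      c1.IsCycle ∧ c2.IsCycle ∧ Odd c1.length ∧ Odd c2.length ∧
      c1.support.Disjoint c2.support ∧
      cycleVerts G = {v | v ∈ c1.support ∨ v ∈ c2.support})
    (hpm : ∃ M : (G.induce {v | v ∉ cycleVerts G}).Subgraph, M.IsPerfectMatching) :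
    2 * _root_.indepNum G + 2 = Fintype.card V := by
  classical
  obtain ⟨a, b, c1, c2, hc1, hc2, ho1, ho2, hdisj, hVc⟩ := hbase
  set n := Fintype.card V with hn
  set K := {k | ∃ s : Finset V, (∀ u ∈ s, ∀ v ∈ s, ¬ G.Adj u v) ∧ s.card = k} with hK
  have hKne : K.Nonempty := ⟨0, ∅, by simp, rfl⟩
  have hKbdd : BddAbove K := by
    refine ⟨n, fun k hk => ?_⟩
    obtain ⟨s, -, rfl⟩ := hk
    exact (Finset.card_le_univ s).trans_eq Finset.card_univ
  -- obtain a maximum independent set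
  have hmax : _root_.indepNum G ∈ K := Nat.sSup_mem hKne hKbdd
  obtain ⟨smax, hsmax, hsc⟩ := hmax
  ----------------------------------------------------------------
  -- UPPER BOUND
  ----------------------------------------------------------------
  set P1 := c1.support.tail.toFinset with hP1
  set P2 := c2.support.tail.toFinset with hP2
  have h1 := aux_cycle_bound hc1 ho1 hsmax
  have h2 := aux_cycle_bound hc2 ho2 hsmax
  have hlen1 : c1.support.tail.length = c1.length := by
    rw [List.length_tail, c1.length_support]; simp
  have hlen2 : c2.support.tail.length = c2.length := by
    rw [List.length_tail, c2.length_support]; simp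
  have hP1card : P1.card = c1.length := by
    rw [hP1, List.toFinset_card_of_nodup hc1.support_nodup, hlen1]
  have hP2card : P2.card = c2.length := by
    rw [hP2, List.toFinset_card_of_nodup hc2.support_nodup, hlen2]
  have hmem1 : ∀ v, v ∈ c1.support ↔ v ∈ P1 := by
    intro v
    rw [hP1, List.mem_toFinset]
    exact aux_mem_support_tail hc1
  have hmem2 : ∀ v, v ∈ c2.support ↔ v ∈ P2 := by
    intro v
    rw [hP2, List.mem_toFinset]
    exact aux_mem_support_tail hc2
  have hdisjP : Disjoint P1 P2 := by
    rw [Finset.disjoint_left]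
    intro v h1' h2'
    exact hdisj ((hmem1 v).mpr h1') ((hmem2 v).mpr h2')
  -- matching bound
  set O := ({v | v ∉ cycleVerts G} : Set V) with hO
  have hOmem : ∀ v : V, v ∈ O ↔ ¬(v ∈ P1 ∨ v ∈ P2) := by
    intro v
    rw [hO, Set.mem_setOf_eq, hVc, Set.mem_setOf_eq]
    rw [hmem1, hmem2]
  obtain ⟨M, hM⟩ := hpm
  have hMall := Subgraph.isPerfectMatching_iff.mp hM
  let g : O → O := fun v => (hMall v).choose
  have hg : ∀ v : O, M.Adj v (g v) := fun v => (hMall v).choose_spec.1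
  have hgu : ∀ (v w : O), M.Adj v w → w = g v := fun v w h => (hMall v).choose_spec.2 w h
  have hginj : Function.Injective g := by
    intro v w hvw
    have h1 : M.Adj (g v) v := (hg v).symm
    have h2 : M.Adj (g v) w := by rw [hvw]; exact (hg w).symm
    have e1 := hgu (g v) v h1
    have e2 := hgu (g v) w h2
    exact e1.trans e2.symm
  have hgadj : ∀ v : O, G.Adj v.1 (g v).1 := by
    intro v
    have h3 : (G.induce O).Adj v (g v) := M.adj_sub (hg v)
    exact h3
  set sO := Finset.univ.filter (fun v : O => v.1 ∈ smax) with hsO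
  have h2a : 2 * sO.card ≤ Fintype.card O := by
    have hjd : Disjoint sO (sO.image g) := by
      rw [Finset.disjoint_left]
      intro x hx hxJ
      obtain ⟨v, hv, rfl⟩ := Finset.mem_image.mp hxJ
      have hv1 : v.1 ∈ smax := (Finset.mem_filter.mp hv).2
      have hv2 : (g v).1 ∈ smax := (Finset.mem_filter.mp hx).2
      exact hsmax _ hv1 _ hv2 (hgadj v)
    have := Finset.card_le_univ (sO ∪ sO.image g)
    rw [Finset.card_union_of_disjoint hjd, Finset.card_image_of_injective _ hginj] at this
    omega
  have hOcard : Fintype.card O + (P1 ∪ P2).card = n := by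
    have h4 : Fintype.card O = (Finset.univ.filter (fun v : V => v ∈ O)).card := by
      rw [Fintype.card_subtype]
    have h5 : Finset.univ.filter (fun v : V => v ∈ O) = Finset.univ \ (P1 ∪ P2) := by
      ext v
      rw [Finset.mem_filter, Finset.mem_sdiff, Finset.mem_union]
      simp only [Finset.mem_univ, true_and]
      rw [hOmem v]
    rw [h4, h5]
    rw [Finset.card_sdiff_add_card_eq_card (Finset.subset_univ _), Finset.card_univ]
  have hmatch : (smax \ (P1 ∪ P2)).card = sO.card := by
    have h6 : smax \ (P1 ∪ P2) = sO.image (fun v => v.1) := by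
      ext v
      rw [Finset.mem_sdiff, Finset.mem_union]
      constructor
      · rintro ⟨hv1, hv2⟩
        have hvO : v ∈ O := (hOmem v).mpr hv2
        refine Finset.mem_image.mpr ⟨⟨v, hvO⟩, ?_, rfl⟩
        exact Finset.mem_filter.mpr ⟨Finset.mem_univ _, hv1⟩
      · intro hv
        obtain ⟨x, hx, rfl⟩ := Finset.mem_image.mp hv
        refine ⟨(Finset.mem_filter.mp hx).2, ?_⟩
        exact (hOmem x.1).mp x.2
    rw [h6, Finset.card_image_of_injective _ Subtype.val_injective]
  have hsplit : (smax ∩ (P1 ∪ P2)).card + (smax \ (P1 ∪ P2)).card = smax.card :=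
    Finset.card_inter_add_card_sdiff smax (P1 ∪ P2)
  have hisplit : smax ∩ (P1 ∪ P2) = (smax ∩ P1) ∪ (smax ∩ P2) :=
    Finset.inter_union_distrib_left smax P1 P2
  have hidisj : Disjoint (smax ∩ P1) (smax ∩ P2) :=
    hdisjP.mono Finset.inter_subset_right Finset.inter_subset_right
  have hicard : (smax ∩ (P1 ∪ P2)).card = (smax ∩ P1).card + (smax ∩ P2).card := by
    rw [hisplit, Finset.card_union_of_disjoint hidisj]
  have hPu : (P1 ∪ P2).card = P1.card + P2.card :=
    Finset.card_union_of_disjoint hdisjP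
  have h1' : 2 * (smax ∩ P1).card + 1 ≤ P1.card := by rw [hP1card]; exact h1
  have h2' : 2 * (smax ∩ P2).card + 1 ≤ P2.card := by rw [hP2card]; exact h2
  have hupper : 2 * smax.card + 2 ≤ n := by omega
  ----------------------------------------------------------------
  -- LOWER BOUND
  ----------------------------------------------------------------
  obtain ⟨T, hTle, hTree⟩ := aux_spanning_tree G hconn
  obtain ⟨C, hC⟩ := aux_tree_coloring hTree
  have hTcard : T.edgeFinset.card + 1 = n := hTree.card_edgeFinset
  have hTsub : T.edgeFinset ⊆ G.edgeFinset := by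
    intro e he
    rw [mem_edgeFinset] at he ⊢
    exact edgeSet_mono hTle he
  set extra := G.edgeFinset \ T.edgeFinset with hextra
  have hextracard : extra.card = 2 := by
    rw [hextra, Finset.card_sdiff_of_subset hTsub, hbicyclic]
    omega
  set bad := fun b : Bool => extra.filter (fun e => ∀ v ∈ e, C v = b) with hbad
  set A := fun b : Bool => Finset.univ.filter (fun v => C v = b) with hA
  set S := fun b : Bool => A b \ (bad b).image (fun e => e.out.1) with hS
  have hSind : ∀ b : Bool, ∀ u ∈ S b, ∀ v ∈ S b, ¬ G.Adj u v := by
    intro b u hu v hv hadj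
    have hu' := Finset.mem_sdiff.mp hu
    have hv' := Finset.mem_sdiff.mp hv
    have hcu : C u = b := (Finset.mem_filter.mp hu'.1).2
    have hcv : C v = b := (Finset.mem_filter.mp hv'.1).2
    have hGe : s(u, v) ∈ G.edgeFinset := mem_edgeFinset.mpr hadj
    by_cases heT : s(u, v) ∈ T.edgeFinset
    · have : T.Adj u v := mem_edgeFinset.mp heT
      exact hC u v this (hcu.trans hcv.symm)
    · have hbadmem : s(u, v) ∈ bad b := by
        rw [hbad]
        refine Finset.mem_filter.mpr ⟨Finset.mem_sdiff.mpr ⟨hGe, heT⟩, ?_⟩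
        intro w hw
        rcases Sym2.mem_iff.mp hw with rfl | rfl
        · exact hcu
        · exact hcv
      have hpickmem : (s(u, v)).out.1 ∈ (bad b).image (fun e => e.out.1) :=
        Finset.mem_image.mpr ⟨_, hbadmem, rfl⟩
      rcases Sym2.mem_iff.mp (Sym2.out_fst_mem s(u, v)) with h' | h'
      · rw [h'] at hpickmem
        exact hu'.2 hpickmem
      · rw [h'] at hpickmem
        exact hv'.2 hpickmem
  have hScard : ∀ b : Bool, (A b).card ≤ (S b).card + (bad b).card := by
    intro b
    calc (A b).card ≤ (S b).card + ((bad b).image (fun e => e.out.1)).card :=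
          Finset.card_le_card_sdiff_add_card
      _ ≤ (S b).card + (bad b).card := by
          exact Nat.add_le_add_left Finset.card_image_le _
  have hbaddisj : Disjoint (bad true) (bad false) := by
    rw [Finset.disjoint_left]
    intro e het hef
    have h1 := (Finset.mem_filter.mp het).2 _ (Sym2.out_fst_mem e)
    have h2 := (Finset.mem_filter.mp hef).2 _ (Sym2.out_fst_mem e)
    rw [h1] at h2
    exact Bool.noConfusion h2
  have hbadsum : (bad true).card + (bad false).card ≤ 2 := by
    rw [← Finset.card_union_of_disjoint hbaddisj, ← hextracard]
    exact Finset.card_le_card (Finset.union_subset (Finset.filter_subset _ _)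
      (Finset.filter_subset _ _))
  have hAsum : (A true).card + (A false).card = n := by
    have h8 := Finset.card_filter_add_card_filter_not
      (s := (Finset.univ : Finset V)) (p := fun v => C v = true)
    have h7 : Finset.univ.filter (fun v => ¬ C v = true) = A false := by
      ext v
      simp [hA, Bool.not_eq_true]
    have h9 : Finset.univ.filter (fun v => C v = true) = A true := by
      ext v
      simp [hA]
    rw [h7, h9] at h8
    rw [h8]
    exact Finset.card_univ
  have hles : ∀ b : Bool, (S b).card ≤ _root_.indepNum G := by
    intro b
    exact le_csSup hKbdd ⟨S b, hSind b, rfl⟩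
  have hlt := hles true
  have hlf := hles false
  have hst := hScard true
  have hsf := hScard false
  omega
end

section
/- Let G be a connected bicyclic graph on n vertices with independence number α and exactly α−1 pendant vertices. Let V′(G) be the set of non-pendant vertices of G having no pendant neighbour. Then 1 ≤ |V′(G)| ≤ 3. -/
open SimpleGraph

section AuxLemmas
variable {V : Type*}

/-- Reachability transfers between graphs on the same vertex set if every edge's
endpoints are reachable in the target. -/
lemma reach_mono' {G H : SimpleGraph V}
    (h : ∀ x y, G.Adj x y → H.Reachable x y) {u v : V} (r : G.Reachable u v) :
    H.Reachable u v := by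
  obtain ⟨w⟩ := r
  induction w with
  | nil => exact Reachable.refl _
  | cons h' p ih => exact (h _ _ h').trans ih

lemma conn_mono' {G H : SimpleGraph V} (hG : G.Connected)
    (h : ∀ x y, G.Adj x y → H.Reachable x y) : H.Connected := by
  haveI : Nonempty V := hG.nonempty
  exact ⟨fun u v => reach_mono' h (hG.preconnected u v)⟩

lemma walk_closed' {G : SimpleGraph V} {S : Set V}
    (hS : ∀ x y, x ∈ S → G.Adj x y → y ∈ S) {u v : V} (w : G.Walk u v) (hu : u ∈ S) :
    v ∈ S := by
  induction w with
  | nil => exact hu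
  | cons h p ih => exact ih (hS _ _ hu h)

/-- Deleting one non-bridge edge keeps the graph connected; the edge count drops by one. -/
lemma triangle_isCycle' {G : SimpleGraph V} {x y z : V}
    (hxy : G.Adj x y) (hyz : G.Adj y z) (hzx : G.Adj z x)
    (h1 : x ≠ y) (h2 : y ≠ z) (h3 : x ≠ z) :
    (Walk.cons hxy (Walk.cons hyz (Walk.cons hzx Walk.nil))).IsCycle := by
  simp [Walk.isCycle_def, Walk.isTrail_def, Sym2.eq_iff]
  tauto

lemma delete_one' [Fintype V] {G : SimpleGraph V} (hc : G.Connected) {u w : V}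
    (huw : G.Adj u w) (hr : (G \ SimpleGraph.fromEdgeSet {s(u, w)}).Reachable u w) :
    ∃ G' : SimpleGraph V, G'.Connected ∧ G'.edgeSet.ncard + 1 = G.edgeSet.ncard := by
  classical
  refine ⟨G.deleteEdges {s(u, w)}, ?_, ?_⟩
  · refine conn_mono' hc ?_
    intro x y hxy
    by_cases h : s(x, y) = s(u, w)
    · rw [Sym2.eq_iff] at h
      have hr' : (G.deleteEdges {s(u, w)}).Reachable u w := hr
      rcases h with ⟨rfl, rfl⟩ | ⟨rfl, rfl⟩
      · exact hr'
      · exact hr'.symm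
    · exact Adj.reachable (by rw [deleteEdges_adj]; exact ⟨hxy, by simpa using h⟩)
  · rw [edgeSet_deleteEdges]
    have hmem : s(u, w) ∈ G.edgeSet := huw
    have hfin : G.edgeSet.Finite := Set.toFinite _
    simpa using Set.ncard_diff_singleton_add_one hmem hfin

/-- From a cycle, produce a deletable non-bridge edge. -/
lemma delete_step' [Fintype V] {G : SimpleGraph V} (hc : G.Connected)
    (hnac : ¬ G.IsAcyclic) :
    ∃ G' : SimpleGraph V, G'.Connected ∧ G'.edgeSet.ncard + 1 = G.edgeSet.ncard := by
  rw [IsAcyclic] at hnac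
  push_neg at hnac
  obtain ⟨v, c, hcyc⟩ := hnac
  cases c with
  | nil => exact absurd hcyc (by simp [Walk.isCycle_def])
  | @cons _ x _ hadj p =>
    have hec : s(v, x) ∈ (Walk.cons hadj p).edges := by simp
    have hnb : ¬ G.IsBridge s(v, x) := by
      rw [isBridge_iff_mem_and_forall_cycle_notMem]
      push_neg
      exact ⟨v, Walk.cons hadj p, hcyc, hec⟩
      exact hadj
    rw [isBridge_iff] at hnb
    push_neg at hnb
    exact delete_one' hc hadj hnb

/-- A connected graph has at least `n - 1` edges. -/
lemma conn_card_le' [Fintype V] :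
    ∀ (m : ℕ) (G : SimpleGraph V), G.edgeSet.ncard = m → G.Connected →
      Fintype.card V ≤ m + 1 := by
  intro m
  induction m using Nat.strong_induction_on with
  | _ m ih =>
    intro G hm hc
    by_cases hac : G.IsAcyclic
    · haveI : Fintype G.edgeSet := (Set.toFinite _).fintype
      have ht : G.IsTree := ⟨hc, hac⟩
      have h1 := ht.card_edgeFinset
      have h2 : G.edgeSet.ncard = G.edgeFinset.card := Set.ncard_eq_toFinset_card' _
      omega
    · obtain ⟨G', hc', hcard⟩ := delete_step' hc hac
      have hlt : G'.edgeSet.ncard < m := by omega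
      have := ih _ hlt G' rfl hc'
      omega

/-- A connected graph with a cycle has at least `n` edges. -/
lemma conn_cyclic_card_le' [Fintype V] {G : SimpleGraph V} (hc : G.Connected)
    (hnac : ¬ G.IsAcyclic) : Fintype.card V ≤ G.edgeSet.ncard := by
  obtain ⟨G', hc', hcard⟩ := delete_step' hc hnac
  have := conn_card_le' _ G' rfl hc'
  omega

/-- A connected bicyclic graph contains no `K₄`. -/
lemma no_K4' [Fintype V] {G : SimpleGraph V} (hconn : G.Connected)
    (hcard : G.edgeSet.ncard = Fintype.card V + 1) {a b c d : V}
    (hab' : a ≠ b) (hac' : a ≠ c) (had' : a ≠ d) (hbc' : b ≠ c) (hbd' : b ≠ d) (hcd' : c ≠ d)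
    (hab : G.Adj a b) (hac : G.Adj a c) (had : G.Adj a d)
    (hbc : G.Adj b c) (hbd : G.Adj b d) (hcd : G.Adj c d) : False := by
  classical
  set D : Set (Sym2 V) := {s(a, b), s(a, c)} with hD
  set G' := G.deleteEdges D with hG'
  have hadj' : ∀ x y : V, G.Adj x y → s(x, y) ∉ D → G'.Adj x y := by
    intro x y h1 h2
    rw [hG', deleteEdges_adj]
    exact ⟨h1, h2⟩
  have hnm : ∀ x y : V, G.Adj x y → s(x, y) ∉ D → G'.Adj x y := hadj'
  have hG'ad : G'.Adj a d := hnm _ _ had (by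
    intro hmem
    simp only [hD, Set.mem_insert_iff, Set.mem_singleton_iff, Sym2.eq_iff] at hmem
    rcases hmem with ((⟨h1, h2⟩ | ⟨h1, h2⟩) | (⟨h1, h2⟩ | ⟨h1, h2⟩)) <;> simp_all)
  have hG'db : G'.Adj d b := hnm _ _ hbd.symm (by
    intro hmem
    simp only [hD, Set.mem_insert_iff, Set.mem_singleton_iff, Sym2.eq_iff] at hmem
    rcases hmem with ((⟨h1, h2⟩ | ⟨h1, h2⟩) | (⟨h1, h2⟩ | ⟨h1, h2⟩)) <;> simp_all)
  have hG'dc : G'.Adj d c := hnm _ _ hcd.symm (by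
    intro hmem
    simp only [hD, Set.mem_insert_iff, Set.mem_singleton_iff, Sym2.eq_iff] at hmem
    rcases hmem with ((⟨h1, h2⟩ | ⟨h1, h2⟩) | (⟨h1, h2⟩ | ⟨h1, h2⟩)) <;> simp_all)
  have hG'bc : G'.Adj b c := hnm _ _ hbc (by
    intro hmem
    simp only [hD, Set.mem_insert_iff, Set.mem_singleton_iff, Sym2.eq_iff] at hmem
    rcases hmem with ((⟨h1, h2⟩ | ⟨h1, h2⟩) | (⟨h1, h2⟩ | ⟨h1, h2⟩)) <;> simp_all)
  -- G' is connected
  have hc' : G'.Connected := by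
    refine conn_mono' hconn ?_
    intro x y hxy
    by_cases h1 : s(x, y) = s(a, b)
    · have hR : G'.Reachable a b := (hG'ad.reachable).trans (hG'db.reachable)
      rw [Sym2.eq_iff] at h1
      rcases h1 with ⟨rfl, rfl⟩ | ⟨rfl, rfl⟩
      · exact hR
      · exact hR.symm
    · by_cases h2 : s(x, y) = s(a, c)
      · have hR : G'.Reachable a c := (hG'ad.reachable).trans (hG'dc.reachable)
        rw [Sym2.eq_iff] at h2
        rcases h2 with ⟨rfl, rfl⟩ | ⟨rfl, rfl⟩
        · exact hR
        · exact hR.symm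
      · exact Adj.reachable (hnm _ _ hxy (by simp [hD, h1, h2]))
  -- G' has a cycle (the triangle b-c-d)
  have hcyc : ¬ G'.IsAcyclic := fun hac =>
    hac _ (triangle_isCycle' hG'bc hG'dc.symm hG'db hbc' hcd' hbd')
  -- edge count of G'
  have hDsub : D ⊆ G.edgeSet := by
    intro e he
    rcases he with rfl | rfl
    · exact hab
    · exact hac
  have hDcard : D.ncard = 2 := Set.ncard_pair (by
    rw [Ne, Sym2.eq_iff]
    rintro (⟨h1, h2⟩ | ⟨h1, h2⟩) <;> simp_all)
  have hG'card : G'.edgeSet.ncard = Fintype.card V - 1 := by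
    rw [hG', edgeSet_deleteEdges, Set.ncard_diff hDsub (Set.toFinite _), hDcard, hcard]
    omega
  have hle := conn_cyclic_card_le' hc' hcyc
  have hpos : 0 < Fintype.card V := Fintype.card_pos_iff.mpr hconn.nonempty
  omega
end AuxLemmas

/-- Let `G` be a connected bicyclic graph with independence number `α` and exactly
`α − 1` pendant vertices. Then the set `V′(G)` of vertices of degree at least 2
having no pendant neighbour satisfies `1 ≤ |V′(G)| ≤ 3`. -/
theorem card_Vprime_bounds {V : Type*} [Fintype V] [DecidableEq V] [Nonempty V]
    (G : SimpleGraph V) [DecidableRel G.Adj]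
    (hconn : G.Connected)
    (hbicyclic : G.edgeFinset.card = Fintype.card V + 1)
    (hpendant : (Finset.univ.filter (fun v : V => G.degree v = 1)).card = _root_.indepNum G - 1) :
    1 ≤ (Finset.univ.filter
          (fun v : V => 2 ≤ G.degree v ∧ ∀ u : V, G.Adj v u → G.degree u ≠ 1)).card ∧
        (Finset.univ.filter
          (fun v : V => 2 ≤ G.degree v ∧ ∀ u : V, G.Adj v u → G.degree u ≠ 1)).card ≤ 3 := by
  classical
  set n := Fintype.card V with hn
  set α := _root_.indepNum G with hα
  set P : Finset V := Finset.univ.filter (fun v : V => G.degree v = 1) with hP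
  set W : Finset V := Finset.univ.filter
    (fun v : V => 2 ≤ G.degree v ∧ ∀ u : V, G.Adj v u → G.degree u ≠ 1) with hW
  -- Independence number machinery
  have hbdd : BddAbove {k | ∃ s : Finset V, (∀ u ∈ s, ∀ v ∈ s, ¬ G.Adj u v) ∧ s.card = k} := by
    refine ⟨n, ?_⟩
    rintro k ⟨s, -, rfl⟩
    exact (Finset.card_le_univ s).trans_eq Finset.card_univ
  have hmemα : α ∈ {k | ∃ s : Finset V, (∀ u ∈ s, ∀ v ∈ s, ¬ G.Adj u v) ∧ s.card = k} := by
    rw [hα, _root_.indepNum]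
    exact Nat.sSup_mem ⟨0, ∅, by simp, by simp⟩ hbdd
  obtain ⟨S₀, hS₀ind, hS₀card⟩ := hmemα
  have hle : ∀ s : Finset V, (∀ u ∈ s, ∀ v ∈ s, ¬ G.Adj u v) → s.card ≤ α := by
    intro s h
    rw [hα, _root_.indepNum]
    exact le_csSup hbdd ⟨s, h, rfl⟩
  have hα1 : 1 ≤ α := by
    have x := Classical.arbitrary V
    have : ({x} : Finset V).card ≤ α := hle {x} (by simp)
    simpa using this
  -- n ≥ 4
  have hn4 : 4 ≤ n := by
    by_contra h
    push_neg at h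
    have hch := SimpleGraph.card_edgeFinset_le_card_choose_two (G := G)
    rw [← hn] at hch
    rw [hbicyclic] at hch
    have hpos : 1 ≤ n := Fintype.card_pos
    have h1 : n.choose 2 ≤ (3 : ℕ).choose 2 := Nat.choose_mono 2 (by omega)
    have h2 : (3 : ℕ).choose 2 = 3 := by decide
    have h3 : n ≤ 2 := by omega
    have h4 : n.choose 2 ≤ (2 : ℕ).choose 2 := Nat.choose_mono 2 h3
    have h5 : (2 : ℕ).choose 2 = 1 := by decide
    omega
  -- Minimum degree 1
  have hdeg1 : ∀ v : V, 1 ≤ G.degree v := by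
    intro v
    rw [Nat.one_le_iff_ne_zero, ← Nat.pos_iff_ne_zero, G.degree_pos_iff_exists_adj]
    obtain ⟨w, hw⟩ := Fintype.exists_ne_of_one_lt_card (by omega) v
    obtain ⟨p⟩ := hconn.preconnected v w
    cases p with
    | nil => exact absurd rfl hw
    | cons h _ => exact ⟨_, h⟩
  -- unique neighbour of a pendant vertex
  have hpuniq : ∀ p q : V, G.degree p = 1 → G.Adj p q → G.neighborFinset p = {q} := by
    intro p q hp hadj
    have hq : q ∈ G.neighborFinset p := (SimpleGraph.mem_neighborFinset _ _ _).mpr hadj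
    rw [← G.card_neighborFinset_eq_degree] at hp
    obtain ⟨a, ha⟩ := Finset.card_eq_one.mp hp
    rw [ha] at hq ⊢
    rw [Finset.mem_singleton] at hq
    rw [hq]
  -- pendant vertices are pairwise non-adjacent
  have hpnadj : ∀ p q : V, G.degree p = 1 → G.degree q = 1 → ¬ G.Adj p q := by
    intro p q hp hq hadj
    have hnp := hpuniq p q hp hadj
    have hnq := hpuniq q p hq hadj.symm
    have hclosed : ∀ x y : V, x ∈ ({p, q} : Set V) → G.Adj x y → y ∈ ({p, q} : Set V) := by
      intro x y hx hxy
      rcases hx with rfl | rfl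
      · have hy : y ∈ G.neighborFinset x := (SimpleGraph.mem_neighborFinset _ _ _).mpr hxy
        rw [hnp, Finset.mem_singleton] at hy
        exact Or.inr hy
      · have hy : y ∈ G.neighborFinset x := (SimpleGraph.mem_neighborFinset _ _ _).mpr hxy
        rw [hnq, Finset.mem_singleton] at hy
        exact Or.inl hy
    have hcard2 : ({p, q} : Finset V).card ≤ 2 := (Finset.card_insert_le _ _).trans (by simp)
    have hne : (Finset.univ \ ({p, q} : Finset V)).Nonempty := by
      rw [← Finset.card_pos, Finset.card_sdiff_of_subset (Finset.subset_univ _), Finset.card_univ]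
      omega
    obtain ⟨r, hr⟩ := hne
    rw [Finset.mem_sdiff, Finset.mem_insert, Finset.mem_singleton] at hr
    obtain ⟨-, hr2⟩ := hr
    push_neg at hr2
    obtain ⟨w⟩ := hconn.preconnected p r
    have hmem := walk_closed' hclosed w (Or.inl rfl)
    rcases hmem with rfl | rfl
    · exact hr2.1 rfl
    · exact hr2.2 rfl
  -- edge count as ncard
  have hEn : G.edgeSet.ncard = n + 1 := by
    rw [← SimpleGraph.coe_edgeFinset, Set.ncard_coe_finset, hbicyclic]
  -- a maximum independent set containing all pendant vertices
  have key : ∀ k : ℕ, ∀ S : Finset V, (∀ u ∈ S, ∀ v ∈ S, ¬ G.Adj u v) → S.card = α →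
      (P \ S).card ≤ k →
      ∃ S' : Finset V, (∀ u ∈ S', ∀ v ∈ S', ¬ G.Adj u v) ∧ S'.card = α ∧ P ⊆ S' := by
    intro k
    induction k with
    | zero =>
      intro S hind hcard h0
      refine ⟨S, hind, hcard, ?_⟩
      rw [← Finset.sdiff_eq_empty_iff_subset, ← Finset.card_eq_zero]
      omega
    | succ k ih =>
      intro S hind hcard hk
      by_cases hPS : P ⊆ S
      · exact ⟨S, hind, hcard, hPS⟩
      · obtain ⟨p, hpP, hpS⟩ := Finset.not_subset.mp hPS
        have hpdeg : G.degree p = 1 := (Finset.mem_filter.mp hpP).2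
        obtain ⟨q, hq⟩ := (G.degree_pos_iff_exists_adj p).mp (by have := hdeg1 p; omega)
        have hnf := hpuniq p q hpdeg hq
        have hqdeg : G.degree q ≠ 1 := fun h => hpnadj p q hpdeg h hq
        have hqS : q ∈ S := by
          by_contra hqS
          have hnb : ∀ z, G.Adj p z → z = q := by
            intro z hz
            have hzm : z ∈ G.neighborFinset p := (SimpleGraph.mem_neighborFinset _ _ _).mpr hz
            rw [hnf, Finset.mem_singleton] at hzm
            exact hzm
          have hind' : ∀ u ∈ insert p S, ∀ v ∈ insert p S, ¬ G.Adj u v := by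
            intro u hu v hv hadj
            rw [Finset.mem_insert] at hu hv
            rcases hu with rfl | hu
            · rcases hv with rfl | hv
              · exact G.loopless.irrefl _ hadj
              · exact hqS ((hnb v hadj) ▸ hv)
            · rcases hv with rfl | hv
              · exact hqS ((hnb u hadj.symm) ▸ hu)
              · exact hind u hu v hv hadj
          have hc := hle _ hind'
          rw [Finset.card_insert_of_notMem hpS, hcard] at hc
          omega
        have hpq : p ≠ q := G.ne_of_adj hq
        have hnb : ∀ z, G.Adj p z → z = q := by
          intro z hz
          have hzm : z ∈ G.neighborFinset p := (SimpleGraph.mem_neighborFinset _ _ _).mpr hz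
          rw [hnf, Finset.mem_singleton] at hzm
          exact hzm
        have hind' : ∀ u ∈ insert p (S.erase q), ∀ v ∈ insert p (S.erase q), ¬ G.Adj u v := by
          intro u hu v hv hadj
          rw [Finset.mem_insert] at hu hv
          rcases hu with rfl | hu
          · rcases hv with rfl | hv
            · exact G.loopless.irrefl _ hadj
            · exact (Finset.mem_erase.mp hv).1 (hnb v hadj)
          · rcases hv with rfl | hv
            · exact (Finset.mem_erase.mp hu).1 (hnb u hadj.symm)
            · exact hind u (Finset.mem_of_mem_erase hu) v (Finset.mem_of_mem_erase hv) hadj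
        have hcard' : (insert p (S.erase q)).card = α := by
          rw [Finset.card_insert_of_notMem (fun h => hpS (Finset.mem_of_mem_erase h)),
            Finset.card_erase_of_mem hqS, hcard]
          omega
        have hsd : P \ insert p (S.erase q) = (P \ S).erase p := by
          ext x
          simp only [Finset.mem_sdiff, Finset.mem_erase, Finset.mem_insert]
          constructor
          · rintro ⟨hxP, hx⟩
            push_neg at hx
            obtain ⟨hxp, hx2⟩ := hx
            refine ⟨hxp, hxP, fun hxS => ?_⟩
            have hxq : x ≠ q := by
              intro h
              exact hqdeg (h ▸ (Finset.mem_filter.mp hxP).2)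
            exact hx2 hxq hxS
          · rintro ⟨hxp, hxP, hxS⟩
            refine ⟨hxP, ?_⟩
            rintro (rfl | ⟨-, hxS'⟩)
            · exact hxp rfl
            · exact hxS hxS'
        have hcount : (P \ insert p (S.erase q)).card ≤ k := by
          rw [hsd, Finset.card_erase_of_mem (Finset.mem_sdiff.mpr ⟨hpP, hpS⟩)]
          omega
        exact ih _ hind' hcard' hcount
  obtain ⟨S, hSind, hScard, hPS⟩ := key (P \ S₀).card S₀ hS₀ind hS₀card le_rfl
  -- lower bound
  have hPcard : P.card = α - 1 := hpendant
  obtain ⟨v, hvS, hvP⟩ : ∃ v, v ∈ S ∧ v ∉ P := by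
    by_contra h
    push_neg at h
    have := Finset.card_le_card (fun x hx => h x hx)
    omega
  have hvdeg : G.degree v ≠ 1 := by
    intro h
    exact hvP (Finset.mem_filter.mpr ⟨Finset.mem_univ _, h⟩)
  have hvW : v ∈ W := by
    rw [hW, Finset.mem_filter]
    refine ⟨Finset.mem_univ _, ?_, ?_⟩
    · have := hdeg1 v; omega
    · intro u hu hud
      have huP : u ∈ P := Finset.mem_filter.mpr ⟨Finset.mem_univ _, hud⟩
      exact hSind v hvS u (hPS huP) hu
  have hlow : 1 ≤ W.card := Finset.card_pos.mpr ⟨v, hvW⟩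
  -- upper bound
  have hupper : W.card ≤ 3 := by
    by_contra hW4
    push_neg at hW4
    obtain ⟨t, hts, htc⟩ := Finset.exists_subset_card_eq (show 4 ≤ W.card by omega)
    obtain ⟨a, hat⟩ := Finset.card_pos.mp (show 0 < t.card by omega)
    have h3 : (t.erase a).card = 3 := by rw [Finset.card_erase_of_mem hat, htc]
    obtain ⟨b, c, d, hbc', hbd', hcd', hbcd⟩ := Finset.card_eq_three.mp h3
    have hbt : b ∈ t.erase a := by rw [hbcd]; simp
    have hct : c ∈ t.erase a := by rw [hbcd]; simp
    have hdt : d ∈ t.erase a := by rw [hbcd]; simp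
    have hab' : a ≠ b := fun h => (Finset.mem_erase.mp hbt).1 h.symm
    have hac' : a ≠ c := fun h => (Finset.mem_erase.mp hct).1 h.symm
    have had' : a ≠ d := fun h => (Finset.mem_erase.mp hdt).1 h.symm
    have haW : a ∈ W := hts hat
    have hbW : b ∈ W := hts (Finset.mem_of_mem_erase hbt)
    have hcW : c ∈ W := hts (Finset.mem_of_mem_erase hct)
    have hdW : d ∈ W := hts (Finset.mem_of_mem_erase hdt)
    have helper : ∀ x y : V, x ∈ W → y ∈ W → x ≠ y → G.Adj x y := by
      intro x y hxW hyW hxy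
      by_contra hnadj
      rw [hW, Finset.mem_filter] at hxW hyW
      obtain ⟨-, hx2, hx3⟩ := hxW
      obtain ⟨-, hy2, hy3⟩ := hyW
      have hxP : x ∉ P := by
        intro h
        have := (Finset.mem_filter.mp h).2
        omega
      have hyP : y ∉ P := by
        intro h
        have := (Finset.mem_filter.mp h).2
        omega
      have hPdeg : ∀ z ∈ P, G.degree z = 1 := fun z hz => (Finset.mem_filter.mp hz).2
      have hQind : ∀ u ∈ insert x (insert y P), ∀ v ∈ insert x (insert y P), ¬ G.Adj u v := by
        intro u hu v hv hadj
        simp only [Finset.mem_insert] at hu hv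
        rcases hu with rfl | rfl | hu <;> rcases hv with rfl | rfl | hv
        · exact G.loopless.irrefl _ hadj
        · exact hnadj hadj
        · exact absurd (hPdeg v hv) (hx3 v hadj)
        · exact hnadj hadj.symm
        · exact G.loopless.irrefl _ hadj
        · exact absurd (hPdeg v hv) (hy3 v hadj)
        · exact absurd (hPdeg u hu) (hx3 u hadj.symm)
        · exact absurd (hPdeg u hu) (hy3 u hadj.symm)
        · exact hpnadj u v (hPdeg u hu) (hPdeg v hv) hadj
      have hQcard : (insert x (insert y P)).card = α + 1 := by
        rw [Finset.card_insert_of_notMem (by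
            rw [Finset.mem_insert]
            rintro (rfl | h)
            · exact hxy rfl
            · exact hxP h),
          Finset.card_insert_of_notMem hyP, hPcard]
        omega
      have := hle _ hQind
      omega
    have hab := helper a b haW hbW hab'
    have hac := helper a c haW hcW hac'
    have had := helper a d haW hdW had'
    have hbc := helper b c hbW hcW hbc'
    have hbd := helper b d hbW hdW hbd'
    have hcd := helper c d hcW hdW hcd'
    exact no_K4' hconn hEn hab' hac' had' hbc' hbd' hcd' hab hac had hbc hbd hcd
  exact ⟨hlow, hupper⟩
end
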